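/- Let p be an odd prime with p ≡ 3 (mod 4), q = p^m with m odd and 3 ∤ m. With S(α,β,γ) = Σ_{x∈F_q} ζ_p^{Tr(αx² + βx^{p+1} + γx^{p²+1})}, one has Σ_{α,β,γ ∈ F_q} S(α,β,γ)³ = ((p+1)(p^m − 1) + 1)·p^{3m}. -/

import Mathlib

attribute [local instance] ZMod.algebra


open Finset
open scoped Classical

section Circle
variable {p : ℕ} [Fact p.Prime]

private lemma ring_char_ne (hp3 : p % 4 = 3) : ringChar (ZMod p) ≠ 2 := by
  rw [ZMod.ringChar_zmod_n]
  intro h; rw [h] at hp3; omega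

private lemma chi_mul_sum (hp3 : p % 4 = 3) :
    ∑ t : ZMod p, quadraticChar (ZMod p) t * quadraticChar (ZMod p) (t + 1) = -1 := by
  classical
  have h0 : (quadraticChar (ZMod p)) (0 : ZMod p) = 0 := by simp
  rw [← Finset.sum_erase_add _ _ (Finset.mem_univ (0 : ZMod p)), h0, zero_mul, add_zero]
  have step1 : ∀ t ∈ Finset.univ.erase (0 : ZMod p),
      quadraticChar (ZMod p) t * quadraticChar (ZMod p) (t + 1)
        = quadraticChar (ZMod p) (1 + t⁻¹) := by
    intro t ht
    have htne : t ≠ 0 := Finset.mem_erase.mp ht |>.1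
    rw [← map_mul]
    have : t * (t + 1) = t ^ 2 * (1 + t⁻¹) := by field_simp
    rw [this, map_mul, quadraticChar_sq_one' htne, one_mul]
  rw [Finset.sum_congr rfl step1]
  have step2 : ∑ t ∈ Finset.univ.erase (0 : ZMod p), quadraticChar (ZMod p) (1 + t⁻¹)
      = ∑ t ∈ Finset.univ.erase (0 : ZMod p), quadraticChar (ZMod p) (1 + t) := by
    refine Finset.sum_nbij' (fun t => t⁻¹) (fun t => t⁻¹) ?_ ?_ ?_ ?_ ?_ <;>
      intro a ha <;> simp_all [inv_ne_zero, inv_inv]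
  rw [step2]
  have h4 := Finset.sum_erase_add Finset.univ (fun t : ZMod p => quadraticChar (ZMod p) (1 + t))
    (Finset.mem_univ (0 : ZMod p))
  simp only [add_zero, map_one] at h4
  have h3 : ∑ t : ZMod p, quadraticChar (ZMod p) (1 + t) = 0 := by
    have he : ∑ t : ZMod p, quadraticChar (ZMod p) (1 + t) = ∑ s : ZMod p, quadraticChar (ZMod p) s :=
      Fintype.sum_bijective _ (Equiv.addLeft (1 : ZMod p)).bijective _ _ (fun t => rfl)
    rw [he]; exact quadraticChar_sum_zero (ring_char_ne hp3)
  linarith [h4, h3]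

private lemma chi_sq_add_one_sum (hp3 : p % 4 = 3) :
    ∑ u : ZMod p, quadraticChar (ZMod p) (u ^ 2 + 1) = -1 := by
  classical
  have key : ∑ u : ZMod p, quadraticChar (ZMod p) (u ^ 2 + 1)
      = ∑ t : ZMod p, (quadraticChar (ZMod p) t + 1) * quadraticChar (ZMod p) (t + 1) := by
    have card_eq : ∀ t : ZMod p, (quadraticChar (ZMod p) t + 1 : ℤ)
        = ∑ v : ZMod p, if v ^ 2 = t then (1 : ℤ) else 0 := by
      intro t
      rw [Finset.sum_boole]
      rw [← quadraticChar_card_sqrts (ring_char_ne hp3) t]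
      congr 1
      simp [Set.toFinset_setOf]
    calc ∑ u : ZMod p, quadraticChar (ZMod p) (u ^ 2 + 1)
        = ∑ u : ZMod p, ∑ t : ZMod p, if u ^ 2 = t then quadraticChar (ZMod p) (t + 1) else 0 := by
          refine Finset.sum_congr rfl fun u _ => ?_
          rw [Finset.sum_ite_eq Finset.univ (u ^ 2) (fun t => (quadraticChar (ZMod p) (t + 1) : ℤ))]
          simp
      _ = ∑ t : ZMod p, ∑ u : ZMod p, if u ^ 2 = t then quadraticChar (ZMod p) (t + 1) else 0 :=
          Finset.sum_comm
      _ = ∑ t : ZMod p, (quadraticChar (ZMod p) t + 1) * quadraticChar (ZMod p) (t + 1) := by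
          refine Finset.sum_congr rfl fun t _ => ?_
          rw [card_eq t, Finset.sum_mul]
          refine Finset.sum_congr rfl fun u _ => ?_
          by_cases h : u ^ 2 = t <;> simp [h]
  rw [key]
  have expand : ∀ t : ZMod p, (quadraticChar (ZMod p) t + 1) * quadraticChar (ZMod p) (t + 1)
      = quadraticChar (ZMod p) t * quadraticChar (ZMod p) (t + 1) + quadraticChar (ZMod p) (t + 1) := by
    intro t; ring
  rw [Finset.sum_congr rfl fun t _ => expand t, Finset.sum_add_distrib, chi_mul_sum hp3]
  have h3 : ∑ t : ZMod p, quadraticChar (ZMod p) (t + 1) = 0 := by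
    have he : ∑ t : ZMod p, quadraticChar (ZMod p) (t + 1) = ∑ s : ZMod p, quadraticChar (ZMod p) s :=
      Fintype.sum_bijective _ (Equiv.addRight (1 : ZMod p)).bijective _ _ (fun t => rfl)
    rw [he]; exact quadraticChar_sum_zero (ring_char_ne hp3)
  rw [h3, add_zero]

lemma circle_count (hp3 : p % 4 = 3) :
    ((Finset.univ.filter fun w : ZMod p × ZMod p => w.1 ^ 2 + w.2 ^ 2 = -1).card : ℤ) = p + 1 := by
  classical
  have hneg1 : quadraticChar (ZMod p) (-1) = -1 := by
    rw [quadraticChar_neg_one (ring_char_ne hp3), ZMod.card, ZMod.χ₄_nat_eq_if_mod_four]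
    have h2 : p % 2 = 1 := by omega
    simp [h2, hp3]
  rw [← Finset.sum_boole]
  rw [Fintype.sum_prod_type]
  have inner : ∀ u : ZMod p, (∑ v : ZMod p, if u ^ 2 + v ^ 2 = -1 then (1:ℤ) else 0)
      = quadraticChar (ZMod p) (-1 - u ^ 2) + 1 := by
    intro u
    have : ∀ v : ZMod p, (u ^ 2 + v ^ 2 = -1) ↔ (v ^ 2 = -1 - u ^ 2) := by
      intro v; constructor <;> intro h <;> linear_combination h
    rw [Finset.sum_congr rfl fun v _ => if_congr (this v) rfl rfl]
    rw [Finset.sum_boole, ← quadraticChar_card_sqrts (ring_char_ne hp3) (-1 - u ^ 2)]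
    congr 1
    simp [Set.toFinset_setOf]
  rw [Finset.sum_congr rfl fun u _ => inner u, Finset.sum_add_distrib]
  have : ∀ u : ZMod p, quadraticChar (ZMod p) (-1 - u ^ 2)
      = - quadraticChar (ZMod p) (u ^ 2 + 1) := by
    intro u
    have h : (-1 - u ^ 2 : ZMod p) = (-1) * (u ^ 2 + 1) := by ring
    rw [h, map_mul, hneg1]; ring
  rw [Finset.sum_congr rfl fun u _ => this u, Finset.sum_neg_distrib, chi_sq_add_one_sum hp3]
  simp [ZMod.card]; ring

end Circle

open Polynomial

section Fld
variable {p : ℕ} [Fact p.Prime] {F : Type*} [Field F] [Fintype F] [CharP F p]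

lemma mem_range_of_pow_card {u : F} (hu : u ^ p = u) :
    ∃ a : ZMod p, algebraMap (ZMod p) F a = u := by
  classical
  have hp1 : 1 < p := (Fact.out : p.Prime).one_lt
  set S : Finset F := Finset.univ.image (algebraMap (ZMod p) F) with hS
  have hcardS : S.card = p := by
    rw [hS, Finset.card_image_of_injective _ (algebraMap (ZMod p) F).injective]
    simp [ZMod.card]
  set f : F[X] := X ^ p - X with hf
  have hdeg : f.natDegree = p := by
    rw [hf]
    rw [natDegree_sub_eq_left_of_natDegree_lt]
    · exact natDegree_X_pow p
    · rw [natDegree_X_pow, natDegree_X]; omega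
  have hf0 : f ≠ 0 := by
    intro h
    rw [h] at hdeg; simp at hdeg; omega
  have hroot : ∀ s : F, s ^ p = s → s ∈ f.roots.toFinset := by
    intro s hs
    rw [Multiset.mem_toFinset, mem_roots hf0]
    simp [hf, IsRoot, hs]
  by_contra hcon
  push_neg at hcon
  have huS : u ∉ S := by
    rw [hS]; simp only [Finset.mem_image, Finset.mem_univ, true_and]
    rintro ⟨a, ha⟩; exact hcon a ha
  have hsub : insert u S ⊆ f.roots.toFinset := by
    intro s hs
    rcases Finset.mem_insert.mp hs with h | h
    · exact h ▸ hroot u hu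
    · rw [hS] at h
      obtain ⟨a, -, rfl⟩ := Finset.mem_image.mp h
      refine hroot _ ?_
      rw [← map_pow, ZMod.pow_card]
  have hle : (insert u S).card ≤ p := by
    calc (insert u S).card ≤ f.roots.toFinset.card := Finset.card_le_card hsub
      _ ≤ Multiset.card f.roots := f.roots.toFinset_card_le
      _ ≤ f.natDegree := f.card_roots'
      _ = p := hdeg
  rw [Finset.card_insert_of_notMem huS, hcardS] at hle
  omega

lemma keyA (hp2 : Odd p) (hsq : ¬ IsSquare (-1 : F)) {u v : F}
    (h1 : u ^ 2 + v ^ 2 = -1) (h2 : u * u ^ p + v * v ^ p = -1) :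
    u ^ p = u ∧ v ^ p = v := by
  have hu : u ≠ 0 := by
    rintro rfl
    exact hsq ⟨v, by linear_combination -h1⟩
  have hab : (u ^ p) ^ 2 + (v ^ p) ^ 2 = -1 := by
    have h := congrArg (· ^ p) h1
    rw [add_pow_char, Odd.neg_one_pow hp2] at h
    calc (u ^ p) ^ 2 + (v ^ p) ^ 2 = (u ^ 2) ^ p + (v ^ 2) ^ p := by
          rw [← pow_mul, ← pow_mul, ← pow_mul, ← pow_mul, Nat.mul_comm]
      _ = -1 := h
  have hd : u * v ^ p = v * u ^ p := by
    have key : (u * v ^ p - v * u ^ p) ^ 2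
        = (u ^ 2 + v ^ 2) * ((u ^ p) ^ 2 + (v ^ p) ^ 2) - (u * u ^ p + v * v ^ p) ^ 2 := by
      ring
    rw [h1, hab, h2] at key
    norm_num at key
    exact sub_eq_zero.mp key
  have ha : u ^ p = u := by
    have h5 : u ^ p * (u ^ 2 + v ^ 2) = -u := by linear_combination u * h2 - v * hd
    rw [h1] at h5
    linear_combination -h5
  refine ⟨ha, ?_⟩
  have : u * v ^ p = u * v := by rw [hd, ha]; ring
  exact mul_left_cancel₀ hu this

end Fld

section Count
variable {p : ℕ} [Fact p.Prime] {F : Type*} [Field F] [Fintype F] [CharP F p]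

lemma inner_count (hp2 : Odd p) (hp3 : p % 4 = 3) (hsq : ¬ IsSquare (-1 : F)) (x : F) :
    (∑ y : F, ∑ z : F, if (x^2+y^2+z^2 = 0 ∧ x^(p+1)+y^(p+1)+z^(p+1) = 0
        ∧ x^(p^2+1)+y^(p^2+1)+z^(p^2+1) = 0) then (1:ℂ) else 0)
      = if x = 0 then 1 else (p + 1 : ℂ) := by
  classical
  by_cases hx : x = 0
  · subst hx
    simp only [if_pos rfl]
    have hiff : ∀ y z : F, ((0:F)^2+y^2+z^2 = 0 ∧ (0:F)^(p+1)+y^(p+1)+z^(p+1) = 0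
        ∧ (0:F)^(p^2+1)+y^(p^2+1)+z^(p^2+1) = 0) ↔ (y = 0 ∧ z = 0) := by
      intro y z
      constructor
      · rintro ⟨e1, -, -⟩
        rw [zero_pow two_ne_zero, zero_add] at e1
        have hz : z = 0 := by
          by_contra hz
          refine hsq ⟨y * z⁻¹, ?_⟩
          have : (y * z⁻¹) ^ 2 = -1 := by
            field_simp
            linear_combination e1
          linear_combination -this
        subst hz
        constructor
        · have : y ^ 2 = 0 := by linear_combination e1
          exact pow_eq_zero_iff two_ne_zero |>.mp this
        · rfl
      · rintro ⟨rfl, rfl⟩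
        refine ⟨by simp [zero_pow], by simp [zero_pow], by simp [zero_pow]⟩
    rw [Finset.sum_congr rfl fun y _ => Finset.sum_congr rfl fun z _ =>
      if_congr (hiff y z) rfl rfl]
    simp [ite_and, Finset.sum_ite_eq']
  · rw [if_neg hx]
    have bijx : Function.Bijective (fun u : F => u * x) :=
      Finite.injective_iff_bijective.mp (mul_left_injective₀ hx)
    have reidx : ∀ g : F → ℂ, ∑ y : F, g y = ∑ u : F, g (u * x) := fun g =>
      (Fintype.sum_bijective _ bijx (fun u => g (u * x)) g (fun u => rfl)).symm
    rw [reidx]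
    rw [Finset.sum_congr rfl fun u _ => reidx (fun z => if (x^2+(u*x)^2+z^2 = 0
      ∧ x^(p+1)+(u*x)^(p+1)+z^(p+1) = 0 ∧ x^(p^2+1)+(u*x)^(p^2+1)+z^(p^2+1) = 0)
      then (1:ℂ) else 0)]
    have cond_iff : ∀ u v : F, (x^2+(u*x)^2+(v*x)^2 = 0 ∧ x^(p+1)+(u*x)^(p+1)+(v*x)^(p+1) = 0
        ∧ x^(p^2+1)+(u*x)^(p^2+1)+(v*x)^(p^2+1) = 0)
        ↔ (u^p = u ∧ v^p = v ∧ u^2+v^2 = -1) := by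
      intro u v
      constructor
      · rintro ⟨e1, e2, e3⟩
        have hx2 : x ^ 2 ≠ 0 := pow_ne_zero _ hx
        have h1 : u^2 + v^2 = -1 := by
          have h : x^2 * (u^2+v^2+1) = 0 := by linear_combination e1
          rcases mul_eq_zero.mp h with h' | h'
          · exact absurd h' hx2
          · linear_combination h'
        have h2 : u * u^p + v * v^p = -1 := by
          have hxp : x^(p+1) ≠ 0 := pow_ne_zero _ hx
          rw [mul_pow, mul_pow, pow_succ u, pow_succ v] at e2
          have h : x^(p+1) * (u * u^p + v * v^p + 1) = 0 := by linear_combination e2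
          rcases mul_eq_zero.mp h with h' | h'
          · exact absurd h' hxp
          · linear_combination h'
        obtain ⟨hu, hv⟩ := keyA hp2 hsq h1 h2
        exact ⟨hu, hv, h1⟩
      · rintro ⟨hu, hv, huv⟩
        have hu2 : u^(p^2) = u := by rw [pow_two, pow_mul, hu, hu]
        have hv2 : v^(p^2) = v := by rw [pow_two, pow_mul, hv, hv]
        refine ⟨by linear_combination x^2 * huv, ?_, ?_⟩
        · rw [mul_pow, mul_pow, pow_succ u, pow_succ v, hu, hv]
          linear_combination x^(p+1) * huv
        · rw [mul_pow, mul_pow, pow_succ u, pow_succ v, hu2, hv2]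
          linear_combination x^(p^2+1) * huv
    rw [Finset.sum_congr rfl fun u _ => Finset.sum_congr rfl fun v _ =>
      if_congr (cond_iff u v) rfl rfl]
    rw [← Fintype.sum_prod_type (f := fun w : F × F =>
      if (w.1^p = w.1 ∧ w.2^p = w.2 ∧ w.1^2+w.2^2 = -1) then (1:ℂ) else 0)]
    rw [Finset.sum_boole]
    have hcards : (Finset.univ.filter fun w : F × F =>
        (w.1^p = w.1 ∧ w.2^p = w.2 ∧ w.1^2+w.2^2 = -1)).card
        = (Finset.univ.filter fun w : ZMod p × ZMod p => w.1^2+w.2^2 = -1).card := by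
      symm
      refine Finset.card_bij (fun w _ => (algebraMap (ZMod p) F w.1, algebraMap (ZMod p) F w.2))
        ?_ ?_ ?_
      · intro w hw
        rw [Finset.mem_filter] at hw ⊢
        refine ⟨Finset.mem_univ _, ?_, ?_, ?_⟩
        · rw [← map_pow, ZMod.pow_card]
        · rw [← map_pow, ZMod.pow_card]
        · rw [← map_pow, ← map_pow, ← map_add, hw.2, map_neg, map_one]
      · intro a _ b _ h
        have h1 := congrArg Prod.fst h
        have h2 := congrArg Prod.snd h
        simp only at h1 h2
        exact Prod.ext ((algebraMap (ZMod p) F).injective h1)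
          ((algebraMap (ZMod p) F).injective h2)
      · intro b hb
        rw [Finset.mem_filter] at hb
        obtain ⟨-, hb1, hb2, hb3⟩ := hb
        obtain ⟨a, ha⟩ := mem_range_of_pow_card hb1
        obtain ⟨c, hc⟩ := mem_range_of_pow_card hb2
        refine ⟨(a, c), ?_, ?_⟩
        swap
        · show ((algebraMap (ZMod p) F) a, (algebraMap (ZMod p) F) c) = b
          rw [ha, hc]
        rw [Finset.mem_filter]
        refine ⟨Finset.mem_univ _, ?_⟩
        apply (algebraMap (ZMod p) F).injective
        rw [map_add, map_pow, map_pow, ha, hc, map_neg, map_one, hb3]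
    rw [hcards]
    have hZ : ((Finset.univ.filter fun w : ZMod p × ZMod p => w.1^2+w.2^2 = -1).card : ℤ)
        = p + 1 := circle_count hp3
    have hN : (Finset.univ.filter fun w : ZMod p × ZMod p => w.1^2+w.2^2 = -1).card = p + 1 := by
      exact_mod_cast hZ
    rw [hN]
    push_cast
    ring

end Count

section MainHelpers

lemma sum_rot {M : Type*} [AddCommMonoid M] {ι : Type*} [Fintype ι] (g : ι → ι → ι → ι → M) :
    ∑ a : ι, ∑ b : ι, ∑ c : ι, ∑ x : ι, g a b c x
      = ∑ x : ι, ∑ a : ι, ∑ b : ι, ∑ c : ι, g a b c x := by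
  calc ∑ a : ι, ∑ b : ι, ∑ c : ι, ∑ x : ι, g a b c x
      = ∑ a : ι, ∑ b : ι, ∑ x : ι, ∑ c : ι, g a b c x :=
        Finset.sum_congr rfl fun a _ => Finset.sum_congr rfl fun b _ => Finset.sum_comm
    _ = ∑ a : ι, ∑ x : ι, ∑ b : ι, ∑ c : ι, g a b c x :=
        Finset.sum_congr rfl fun a _ => Finset.sum_comm
    _ = ∑ x : ι, ∑ a : ι, ∑ b : ι, ∑ c : ι, g a b c x := Finset.sum_comm

lemma factor3 {ι : Type*} [Fintype ι] (A B C : ι → ℂ) :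
    ∑ a : ι, ∑ b : ι, ∑ c : ι, A a * B b * C c
      = (∑ a : ι, A a) * (∑ b : ι, B b) * (∑ c : ι, C c) := by
  rw [Finset.sum_mul_sum, Finset.sum_mul]
  refine Finset.sum_congr rfl fun a _ => ?_
  rw [Finset.sum_mul]
  refine Finset.sum_congr rfl fun b _ => ?_
  rw [Finset.mul_sum]

lemma cube_sum {ι : Type*} [Fintype ι] (g : ι → ℂ) :
    (∑ x : ι, g x) ^ 3 = ∑ x : ι, ∑ y : ι, ∑ z : ι, g x * g y * g z := by
  rw [factor3 g g g]; ring

end MainHelpers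

open Complex in
theorem stmt_14 (p m : ℕ) [Fact p.Prime] (hp2 : Odd p) (hp3 : p % 4 = 3)
    (hm : Odd m) (hm3 : ¬ (3 ∣ m))
    (F : Type*) [Field F] [Fintype F] [CharP F p] (hcard : Fintype.card F = p ^ m)
    (ζ : ℂ) (hζ : ζ = Complex.exp (2 * Real.pi * I / p)) :
    (∑ α : F, ∑ β : F, ∑ γ : F,
        (∑ x : F, ζ ^ (Algebra.trace (ZMod p) F
              (α * x ^ 2 + β * x ^ (p + 1) + γ * x ^ (p ^ 2 + 1))).val) ^ 3)
      = ((p + 1 : ℂ) * ((p : ℂ) ^ m - 1) + 1) * (p : ℂ) ^ (3 * m) := by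
  classical
  have hpp : p.Prime := Fact.out
  have hp0 : p ≠ 0 := hpp.ne_zero
  haveI : NeZero p := ⟨hp0⟩
  have hζprim : IsPrimitiveRoot ζ p := hζ ▸ Complex.isPrimitiveRoot_exp p hp0
  have hζp : ζ ^ p = 1 := hζprim.pow_eq_one
  set ψ : AddChar F ℂ := (AddChar.zmodChar p hζp).compAddMonoidHom
    (Algebra.trace (ZMod p) F).toAddMonoidHom with hψdef
  have hψapp : ∀ e : F, ζ ^ (Algebra.trace (ZMod p) F e).val = ψ e := fun e => rfl
  have hψprim : ψ.IsPrimitive := by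
    apply AddChar.IsPrimitive.of_ne_one
    rw [AddChar.ne_one_iff]
    obtain ⟨a, ha⟩ : ∃ a : F, Algebra.trace (ZMod p) F a ≠ 0 := by
      by_contra hf
      push_neg at hf
      have htr := (traceForm_nondegenerate (ZMod p) F).1 (1 : F)
      simp only [Algebra.traceForm_apply, one_mul] at htr
      exact one_ne_zero (htr fun y => hf y)
    refine ⟨a, fun hcon => ?_⟩
    have hval0 : (Algebra.trace (ZMod p) F a).val ≠ 0 := by
      intro h0
      exact ha ((ZMod.val_eq_zero _).mp h0)
    exact hζprim.pow_ne_one_of_pos_of_lt hval0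
      (ZMod.val_lt _) (by rw [hψapp] at *; exact hcon)
  -- card facts
  have hq3 : Fintype.card F % 4 = 3 := by
    rw [hcard]
    obtain ⟨k, rfl⟩ := hm
    rw [Nat.pow_mod, hp3]
    rw [pow_succ, pow_mul, Nat.mul_mod, Nat.pow_mod]
    norm_num
  have hsq : ¬ IsSquare (-1 : F) := by
    rw [FiniteField.isSquare_neg_one_iff]
    simp [hq3]
  -- step 0
  simp only [hψapp]
  -- step 1+2: cube and regroup
  have main3 : ∀ α β γ : F,
      (∑ x : F, ψ (α * x ^ 2 + β * x ^ (p + 1) + γ * x ^ (p ^ 2 + 1))) ^ 3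
      = ∑ x : F, ∑ y : F, ∑ z : F,
          ψ (α * (x^2+y^2+z^2)) * ψ (β * (x^(p+1)+y^(p+1)+z^(p+1)))
            * ψ (γ * (x^(p^2+1)+y^(p^2+1)+z^(p^2+1))) := by
    intro α β γ
    rw [cube_sum]
    refine Finset.sum_congr rfl fun x _ => Finset.sum_congr rfl fun y _ =>
      Finset.sum_congr rfl fun z _ => ?_
    simp only [mul_add, AddChar.map_add_eq_mul]
    ring
  rw [Finset.sum_congr rfl fun α _ => Finset.sum_congr rfl fun β _ =>
    Finset.sum_congr rfl fun γ _ => main3 α β γ]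
  -- step 3: rotate sums
  rw [sum_rot]
  rw [Finset.sum_congr rfl fun x (_ : x ∈ Finset.univ) => sum_rot
    (fun α β γ y => ∑ z : F, ψ (α * (x^2+y^2+z^2)) * ψ (β * (x^(p+1)+y^(p+1)+z^(p+1)))
      * ψ (γ * (x^(p^2+1)+y^(p^2+1)+z^(p^2+1))))]
  rw [Finset.sum_congr rfl fun x (_ : x ∈ Finset.univ) =>
    Finset.sum_congr rfl fun y (_ : y ∈ Finset.univ) => sum_rot
    (fun α β γ z => ψ (α * (x^2+y^2+z^2)) * ψ (β * (x^(p+1)+y^(p+1)+z^(p+1)))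
      * ψ (γ * (x^(p^2+1)+y^(p^2+1)+z^(p^2+1))))]
  -- step 4: factor and orthogonality
  have orth : ∀ b : F, ∑ a : F, ψ (a * b) = if b = 0 then ((p:ℂ)^m) else 0 := by
    intro b
    rw [AddChar.sum_mulShift b hψprim]
    split_ifs <;> simp [hcard]
  have inner3 : ∀ x y z : F,
      (∑ α : F, ∑ β : F, ∑ γ : F,
        ψ (α * (x^2+y^2+z^2)) * ψ (β * (x^(p+1)+y^(p+1)+z^(p+1)))
          * ψ (γ * (x^(p^2+1)+y^(p^2+1)+z^(p^2+1))))
      = ((p:ℂ)^m)^3 * (if (x^2+y^2+z^2 = 0 ∧ x^(p+1)+y^(p+1)+z^(p+1) = 0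
          ∧ x^(p^2+1)+y^(p^2+1)+z^(p^2+1) = 0) then (1:ℂ) else 0) := by
    intro x y z
    rw [factor3, orth, orth, orth]
    by_cases h1 : x^2+y^2+z^2 = 0 <;>
      by_cases h2 : x^(p+1)+y^(p+1)+z^(p+1) = 0 <;>
      by_cases h3 : x^(p^2+1)+y^(p^2+1)+z^(p^2+1) = 0 <;>
      simp [h1, h2, h3] <;> ring
  rw [Finset.sum_congr rfl fun x (_ : x ∈ Finset.univ) =>
    Finset.sum_congr rfl fun y (_ : y ∈ Finset.univ) =>
    Finset.sum_congr rfl fun z (_ : z ∈ Finset.univ) => inner3 x y z]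
  -- step 7: pull out constant
  simp only [← Finset.mul_sum]
  -- step 8: inner counts
  rw [Finset.sum_congr rfl fun x (_ : x ∈ Finset.univ) => inner_count hp2 hp3 hsq x]
  -- step 9: final sum over x
  have hsplit : ∑ x : F, (if x = 0 then (1:ℂ) else (p + 1))
      = 1 + ((Fintype.card F : ℂ) - 1) * (p + 1) := by
    rw [Finset.sum_ite]
    have h1 : Finset.filter (fun x : F => x = 0) Finset.univ = {0} := by
      ext t; simp
    have h2 : Finset.filter (fun x : F => ¬ x = 0) Finset.univ = Finset.univ.erase 0 := by
      ext t; simp [Finset.mem_erase, and_comm]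
    rw [h1, h2, Finset.sum_const, Finset.sum_const, Finset.card_singleton,
      Finset.card_erase_of_mem (Finset.mem_univ _), Finset.card_univ]
    have hpos : 1 ≤ Fintype.card F := Fintype.card_pos
    rw [nsmul_eq_mul, nsmul_eq_mul, Nat.cast_sub hpos]
    push_cast
    ring
  rw [hsplit, hcard]
  push_cast
  ring
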